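/- arXiv:1806.08392 — 4 statements merged into one kernel-verified Lean document; each statement's English description precedes it below -/
import Mathlib

section
/- For each integer $k \geq 2$, the function $\gamma(k,\alpha) = \alpha \cdot \frac{(1+\alpha)^{k-1} - (1-\alpha)^{k-1}}{(1+\alpha)^k + (1-\alpha)^k}$ is strictly increasing in $\alpha$ on the interval $(0,1)$. -/
private lemma g_mono {m : ℕ} (hm : 1 ≤ m) {s t : ℝ} (hs : 0 < s) (hst : s < t) (ht : t < 1) :
    (s + s ^ m) / (2 * (1 + s ^ (m + 1))) < (t + t ^ m) / (2 * (1 + t ^ (m + 1))) := by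
  have hs1 : s < 1 := hst.trans ht
  have ht0 : 0 < t := hs.trans hst
  have hsm : s ^ m < t ^ m := pow_lt_pow_left₀ hst hs.le (by omega)
  have hst1 : s * t < 1 := by nlinarith
  have hstm : s ^ m * t ^ m < 1 := by
    calc s ^ m * t ^ m = (s * t) ^ m := (mul_pow s t m).symm
    _ < 1 := pow_lt_one₀ (by positivity) hst1 (by omega)
  have hd1 : (0:ℝ) < 2 * (1 + s ^ (m + 1)) := by positivity
  have hd2 : (0:ℝ) < 2 * (1 + t ^ (m + 1)) := by positivity
  rw [div_lt_div_iff₀ hd1 hd2, pow_succ, pow_succ]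
  nlinarith [mul_pos (sub_pos.2 hst) (sub_pos.2 hstm),
    mul_pos (sub_pos.2 hsm) (sub_pos.2 hst1)]

private lemma key_id (m : ℕ) {x : ℝ} (hx0 : 0 < x) (hx1 : x < 1) :
    x * ((1 + x) ^ m - (1 - x) ^ m) / ((1 + x) ^ (m + 1) + (1 - x) ^ (m + 1))
      = 1 / 2 - ((1 - x) / (1 + x) + ((1 - x) / (1 + x)) ^ m)
          / (2 * (1 + ((1 - x) / (1 + x)) ^ (m + 1))) := by
  have hu : (0:ℝ) < 1 + x := by linarith
  have hv : (0:ℝ) < 1 - x := by linarith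
  have hA : (0:ℝ) < (1 + x) ^ m := by positivity
  have hB : (0:ℝ) < (1 - x) ^ m := by positivity
  have hden : (0:ℝ) < (1 + x) ^ m * (1 + x) + (1 - x) ^ m * (1 - x) := by positivity
  rw [div_pow, div_pow, pow_succ, pow_succ]
  have h2 : (0:ℝ) < 2 * (1 + (1 - x) ^ m * (1 - x) / ((1 + x) ^ m * (1 + x))) := by positivity
  field_simp
  ring

/-- For each integer `k ≥ 2`, the function
`γ(k,α) = α ((1+α)^(k-1) - (1-α)^(k-1)) / ((1+α)^k + (1-α)^k)`
is strictly increasing in `α` on `(0,1)`. -/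
theorem stmt5 (k : ℕ) (hk : 2 ≤ k) :
    StrictMonoOn
      (fun α : ℝ =>
        α * ((1 + α) ^ (k - 1) - (1 - α) ^ (k - 1)) / ((1 + α) ^ k + (1 - α) ^ k))
      (Set.Ioo (0 : ℝ) 1) := by
  obtain ⟨m, rfl⟩ : ∃ m, k = m + 1 := ⟨k - 1, by omega⟩
  have hm : 1 ≤ m := by omega
  intro a ha b hb hab
  obtain ⟨ha0, ha1⟩ := ha
  obtain ⟨hb0, hb1⟩ := hb
  simp only [Nat.add_sub_cancel]
  rw [key_id m ha0 ha1, key_id m hb0 hb1]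
  have hua : (0:ℝ) < 1 + a := by linarith
  have hub : (0:ℝ) < 1 + b := by linarith
  have hs : 0 < (1 - b) / (1 + b) := div_pos (by linarith) hub
  have hst : (1 - b) / (1 + b) < (1 - a) / (1 + a) := by
    rw [div_lt_div_iff₀ hub hua]; nlinarith
  have ht : (1 - a) / (1 + a) < 1 := by
    rw [div_lt_one hua]; linarith
  have := g_mono hm hs hst ht
  linarith
end

section
/- Fix an integer $k \geq 2$ and $\gamma_0 \in (0,1/2)$, and set $\epsilon = 2\gamma_0 \cdot \frac{(1-2\gamma_0)^{k-1}}{1 - (1-2\gamma_0)^{k-1}}$. Then $\gamma\left(k, \frac{\gamma_0 + \epsilon}{1-\gamma_0}\right) \geq \gamma_0$, where $\gamma(k,\alpha) = \alpha \cdot \frac{(1+\alpha)^{k-1} - (1-\alpha)^{k-1}}{(1+\alpha)^k + (1-\alpha)^k}$. -/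
/-- For `k ≥ 2`, `γ₀ ∈ (0,1/2)` and `ε = 2γ₀ (1-2γ₀)^(k-1) / (1 - (1-2γ₀)^(k-1))`,
there holds `γ(k, (γ₀+ε)/(1-γ₀)) ≥ γ₀`, where
`γ(k,α) = α ((1+α)^(k-1) - (1-α)^(k-1)) / ((1+α)^k + (1-α)^k)`. -/
theorem stmt8 (k : ℕ) (hk : 2 ≤ k) (γ₀ ε : ℝ) (hγ : 0 < γ₀ ∧ γ₀ < 1 / 2)
    (hε : ε = 2 * γ₀ * ((1 - 2 * γ₀) ^ (k - 1) / (1 - (1 - 2 * γ₀) ^ (k - 1)))) :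
    γ₀ ≤
      ((γ₀ + ε) / (1 - γ₀)) *
          ((1 + (γ₀ + ε) / (1 - γ₀)) ^ (k - 1) - (1 - (γ₀ + ε) / (1 - γ₀)) ^ (k - 1)) /
          ((1 + (γ₀ + ε) / (1 - γ₀)) ^ k + (1 - (γ₀ + ε) / (1 - γ₀)) ^ k) := by
  obtain ⟨hγ1, hγ2⟩ := hγ
  obtain ⟨m, hm, rfl⟩ : ∃ m, 1 ≤ m ∧ k = m + 1 := ⟨k - 1, by omega, by omega⟩
  simp only [Nat.add_sub_cancel] at *
  have hb0 : (0:ℝ) < 1 - 2 * γ₀ := by linarith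
  have hb1 : (1:ℝ) - 2 * γ₀ < 1 := by linarith
  have hc : (0:ℝ) < 1 - γ₀ := by linarith
  set t : ℝ := (1 - 2 * γ₀) ^ m with ht
  have ht0 : 0 < t := pow_pos hb0 m
  have ht1 : t < 1 := pow_lt_one₀ (le_of_lt hb0) hb1 (by omega)
  have h1t : (0:ℝ) < 1 - t := by linarith
  have hε0 : 0 < ε := by
    rw [hε]; positivity
  have hεt : ε * (1 - t) = 2 * γ₀ * t := by
    rw [hε]; field_simp
  have htb : t ≤ 1 - 2 * γ₀ := pow_le_of_le_one (le_of_lt hb0) (le_of_lt hb1) (by omega)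
  set A : ℝ := 1 - 2 * γ₀ - ε with hA
  have hA0 : 0 ≤ A := by
    have : ε ≤ 1 - 2 * γ₀ := by nlinarith
    linarith
  have hA_le : A ≤ (1 - 2 * γ₀) * (1 + ε) := by nlinarith
  have hAm : A ^ m ≤ t * (1 + ε) ^ m := by
    calc A ^ m ≤ ((1 - 2 * γ₀) * (1 + ε)) ^ m := pow_le_pow_left₀ hA0 hA_le m
    _ = t * (1 + ε) ^ m := by rw [mul_pow]
  have hεform : ε = (2 * γ₀ + ε) * t := by nlinarith
  have key : (2 * γ₀ + ε) * A ^ m ≤ ε * (1 + ε) ^ m := by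
    have h2 : (2 * γ₀ + ε) * A ^ m ≤ (2 * γ₀ + ε) * (t * (1 + ε) ^ m) :=
      mul_le_mul_of_nonneg_left hAm (by linarith)
    calc (2 * γ₀ + ε) * A ^ m ≤ (2 * γ₀ + ε) * (t * (1 + ε) ^ m) := h2
    _ = ((2 * γ₀ + ε) * t) * (1 + ε) ^ m := by ring
    _ = ε * (1 + ε) ^ m := by rw [← hεform]
  have h1β : 1 + (γ₀ + ε) / (1 - γ₀) = (1 + ε) / (1 - γ₀) := by
    field_simp; ring
  have h2β : 1 - (γ₀ + ε) / (1 - γ₀) = A / (1 - γ₀) := by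
    field_simp [hA]; ring
  rw [h1β, h2β, div_pow, div_pow, div_pow, div_pow]
  have hεp : (0:ℝ) < 1 + ε := by linarith
  have hD : 0 < (1 + ε) ^ (m + 1) / (1 - γ₀) ^ (m + 1) + A ^ (m + 1) / (1 - γ₀) ^ (m + 1) := by
    have h1 : 0 < (1 + ε) ^ (m + 1) / (1 - γ₀) ^ (m + 1) := by positivity
    have h2 : 0 ≤ A ^ (m + 1) / (1 - γ₀) ^ (m + 1) := by positivity
    linarith
  have hckey : γ₀ * ((1 + ε) ^ (m + 1) + A ^ (m + 1)) ≤ (γ₀ + ε) * ((1 + ε) ^ m - A ^ m) := by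
    have e1 : (1 + ε) ^ (m + 1) = (1 + ε) ^ m * (1 + ε) := pow_succ _ _
    have e2 : A ^ (m + 1) = A ^ m * A := pow_succ _ _
    rw [e1, e2]
    have expand : (γ₀ + ε) * ((1 + ε) ^ m - A ^ m) - γ₀ * ((1 + ε) ^ m * (1 + ε) + A ^ m * A)
        = (1 - γ₀) * (ε * (1 + ε) ^ m - (2 * γ₀ + ε) * A ^ m) := by rw [hA]; ring
    nlinarith [mul_nonneg (le_of_lt hc) (sub_nonneg.2 key)]
  have hD0 : 0 < (1 + ε) ^ (m + 1) + A ^ (m + 1) := by positivity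
  have hmain : γ₀ ≤ (γ₀ + ε) * ((1 + ε) ^ m - A ^ m) / ((1 + ε) ^ (m + 1) + A ^ (m + 1)) := by
    rw [le_div_iff₀ hD0]
    linarith [hckey]
  have hEq : (γ₀ + ε) / (1 - γ₀) * ((1 + ε) ^ m / (1 - γ₀) ^ m - A ^ m / (1 - γ₀) ^ m) /
      ((1 + ε) ^ (m + 1) / (1 - γ₀) ^ (m + 1) + A ^ (m + 1) / (1 - γ₀) ^ (m + 1))
      = (γ₀ + ε) * ((1 + ε) ^ m - A ^ m) / ((1 + ε) ^ (m + 1) + A ^ (m + 1)) := by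
    rw [div_sub_div_same, ← add_div, div_mul_div_comm, ← pow_succ']
    have hcc : ((1 - γ₀) ^ (m + 1) : ℝ) ≠ 0 := by positivity
    rw [div_div_div_comm, div_self hcc, div_one]
  rw [hEq]
  exact hmain
end

section
/- Define $F(k,\gamma) = \inf_{x > 0}\left[\log_2((1+x)^k + (1-x)^k) - \gamma k\log_2 x\right] - 1$. Then for every integer $k \geq 2$ and $\gamma \in (0,1/2)$: $k h(\gamma) - 1 \leq F(k,\gamma) \leq k h(\gamma) + \log_2(1 + (1-2\gamma)^k) - 1$. -/
open Real

/-- Weighted AM-GM: `γ^(-γ) (1-γ)^(γ-1) x^γ ≤ 1 + x`. -/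
lemma lemA_aux {γ x : ℝ} (h0 : 0 < γ) (h1 : γ < 1) (hx : 0 ≤ x) :
    γ ^ (-γ) * (1 - γ) ^ (γ - 1) * x ^ γ ≤ 1 + x := by
  have h1' : 0 < 1 - γ := by linarith
  have key := Real.geom_mean_le_arith_mean2_weighted (le_of_lt h0)
    (le_of_lt h1') (by positivity : (0:ℝ) ≤ x / γ)
    (by positivity : (0:ℝ) ≤ 1 / (1 - γ)) (by ring)
  have e1 : (x / γ) ^ γ = x ^ γ * γ ^ (-γ) := by
    rw [Real.div_rpow hx h0.le, Real.rpow_neg h0.le, div_eq_mul_inv]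
  have e2 : (1 / (1 - γ)) ^ (1 - γ) = (1 - γ) ^ (γ - 1) := by
    rw [Real.div_rpow zero_le_one h1'.le, Real.one_rpow,
      show (γ - 1) = -(1 - γ) by ring, Real.rpow_neg h1'.le, one_div]
  have e3 : γ * (x / γ) + (1 - γ) * (1 / (1 - γ)) = x + 1 := by
    field_simp
  rw [e1, e2, e3] at key
  calc γ ^ (-γ) * (1 - γ) ^ (γ - 1) * x ^ γ
      = x ^ γ * γ ^ (-γ) * (1 - γ) ^ (γ - 1) := by ring
    _ ≤ x + 1 := key
    _ = 1 + x := by ring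

/-- With `F(k,γ) = inf_{x>0} [log₂((1+x)^k + (1-x)^k) - γ k log₂ x] - 1`,
for every integer `k ≥ 2` and `γ ∈ (0,1/2)`:
`k h(γ) - 1 ≤ F(k,γ) ≤ k h(γ) + log₂(1 + (1-2γ)^k) - 1`. -/
theorem stmt12 (k : ℕ) (hk : 2 ≤ k) (γ : ℝ) (hγ : 0 < γ ∧ γ < 1 / 2)
    (F : ℝ)
    (hF : F = (⨅ x : Set.Ioi (0 : ℝ),
        (Real.logb 2 ((1 + (x : ℝ)) ^ k + (1 - (x : ℝ)) ^ k)
          - γ * k * Real.logb 2 (x : ℝ))) - 1) :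
    (k : ℝ) * (-(γ * Real.logb 2 γ) - (1 - γ) * Real.logb 2 (1 - γ)) - 1 ≤ F
    ∧ F ≤ (k : ℝ) * (-(γ * Real.logb 2 γ) - (1 - γ) * Real.logb 2 (1 - γ))
        + Real.logb 2 (1 + (1 - 2 * γ) ^ k) - 1 := by
  obtain ⟨hγ0, hγh⟩ := hγ
  have hγ1 : γ < 1 := by linarith
  have h1γ : (0:ℝ) < 1 - γ := by linarith
  set c : ℝ := γ ^ (-γ) * (1 - γ) ^ (γ - 1) with hc
  have hcpos : 0 < c := by positivity
  have hc2 : c ≤ 2 := by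
    have h := lemA_aux hγ0 hγ1 (zero_le_one : (0:ℝ) ≤ 1)
    rw [Real.one_rpow, mul_one] at h
    linarith
  set h : ℝ := -(γ * Real.logb 2 γ) - (1 - γ) * Real.logb 2 (1 - γ) with hh
  have hlogc : Real.logb 2 c = h := by
    rw [hc, Real.logb_mul (by positivity) (by positivity),
      Real.logb_rpow_eq_mul_logb_of_pos hγ0, Real.logb_rpow_eq_mul_logb_of_pos h1γ, hh]
    ring
  -- the pointwise lower bound
  have key : ∀ x : ℝ, 0 < x →
      (k:ℝ) * h ≤ Real.logb 2 ((1 + x) ^ k + (1 - x) ^ k) - γ * k * Real.logb 2 x := by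
    intro x hx
    have hfx : c ^ k * x ^ (γ * (k:ℝ)) ≤ (1 + x) ^ k + (1 - x) ^ k := by
      have hxg : x ^ (γ * (k:ℝ)) = (x ^ γ) ^ k := by
        rw [Real.rpow_mul hx.le, Real.rpow_natCast]
      rw [hxg, ← mul_pow]
      rcases le_total x 1 with hx1 | hx1
      · have h1 : c * x ^ γ ≤ 1 + x := lemA_aux hγ0 hγ1 hx.le
        have h2 : (c * x ^ γ) ^ k ≤ (1 + x) ^ k :=
          pow_le_pow_left₀ (by positivity) h1 k
        nlinarith [pow_nonneg (by linarith : (0:ℝ) ≤ 1 - x) k]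
      · -- x ≥ 1
        have hb0 : (0:ℝ) ≤ x - 1 := by linarith
        have hab : x - 1 ≤ 1 + x := by linarith
        have h1 : c * x ^ γ ≤ 2 * x ^ ((1:ℝ)/2) := by
          have : x ^ γ ≤ x ^ ((1:ℝ)/2) :=
            Real.rpow_le_rpow_of_exponent_le hx1 (by linarith)
          calc c * x ^ γ ≤ 2 * x ^ γ := by
                have := Real.rpow_nonneg hx.le γ
                nlinarith
            _ ≤ 2 * x ^ ((1:ℝ)/2) := by linarith
        have h2 : (c * x ^ γ) ^ k ≤ (2 * x ^ ((1:ℝ)/2)) ^ k :=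
          pow_le_pow_left₀ (by positivity) h1 k
        have h3 : (2 * x ^ ((1:ℝ)/2)) ^ k = (4 * x) ^ ((k:ℝ)/2) := by
          rw [mul_pow, ← Real.rpow_natCast (x ^ ((1:ℝ)/2)) k, ← Real.rpow_mul hx.le]
          rw [Real.mul_rpow (by norm_num) hx.le]
          congr 1
          · rw [show (4:ℝ) = 2 ^ (2:ℝ) by norm_num, ← Real.rpow_mul (by norm_num)]
            rw [← Real.rpow_natCast 2 k]
            ring_nf
          · ring_nf
        have h4 : (4 * x) ^ ((k:ℝ)/2) ≤ (1 + x) ^ k + (1 - x) ^ k := by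
          have ha : (0:ℝ) < 1 + x := by linarith
          have hsq : 4 * x ≤ (1 + x) ^ 2 := by nlinarith
          have h4xpos : (0:ℝ) < 4 * x := by linarith
          have hk2 : (2:ℝ) ≤ (k:ℝ) := by exact_mod_cast hk
          have e1 : (4*x) ^ ((k:ℝ)/2) = (4*x) * (4*x) ^ ((k:ℝ)/2 - 1) := by
            calc (4*x) ^ ((k:ℝ)/2) = (4*x) ^ ((1:ℝ) + ((k:ℝ)/2 - 1)) := by ring_nf
              _ = (4*x) ^ (1:ℝ) * (4*x) ^ ((k:ℝ)/2 - 1) := Real.rpow_add h4xpos _ _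
              _ = (4*x) * (4*x) ^ ((k:ℝ)/2 - 1) := by rw [Real.rpow_one]
          have e2 : (4*x) ^ ((k:ℝ)/2 - 1) ≤ ((1+x)^2 : ℝ) ^ ((k:ℝ)/2 - 1) :=
            Real.rpow_le_rpow h4xpos.le hsq (by linarith)
          have e3 : ((1+x)^2 : ℝ) ^ ((k:ℝ)/2 - 1) = (1+x) ^ (k - 2) := by
            rw [← Real.rpow_natCast (1+x) (k-2), ← Real.rpow_natCast (1+x) 2,
              ← Real.rpow_mul ha.le]
            congr 1
            rw [Nat.cast_sub hk]
            push_cast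
            ring
          have e4 : (x-1) ^ (k-2) ≤ (1+x) ^ (k-2) := pow_le_pow_left₀ hb0 hab _
          have ek : (1+x) ^ k = (1+x)^2 * (1+x)^(k-2) := by
            rw [← pow_add]
            congr 1
            omega
          have ekb : (x-1) ^ k = (x-1)^2 * (x-1)^(k-2) := by
            rw [← pow_add]
            congr 1
            omega
          have e5 : (1-x) ^ k ≥ -((x-1) ^ k) := by
            have : |(1-x) ^ k| = (x-1) ^ k := by
              rw [abs_pow, abs_of_nonpos (by linarith : 1 - x ≤ 0)]
              ring_nf
            linarith [neg_abs_le ((1-x)^k), this]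
          have e6 : (4*x) * (4*x) ^ ((k:ℝ)/2 - 1) ≤ (4*x) * ((1+x) ^ (k-2)) :=
            mul_le_mul_of_nonneg_left (e2.trans_eq e3) h4xpos.le
          have e7 : (4*x) * ((1+x) ^ (k-2)) ≤ (1+x)^k - (x-1)^k := by
            have e8 : (x-1)^2 * ((x-1)^(k-2)) ≤ (x-1)^2 * ((1+x) ^ (k-2)) :=
              mul_le_mul_of_nonneg_left e4 (sq_nonneg (x-1))
            calc (4*x) * ((1+x) ^ (k-2))
                = (1+x)^2 * ((1+x)^(k-2)) - (x-1)^2 * ((1+x)^(k-2)) := by ring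
              _ ≤ (1+x)^2 * ((1+x)^(k-2)) - (x-1)^2 * ((x-1)^(k-2)) := by linarith
              _ = (1+x)^k - (x-1)^k := by rw [ek, ekb]
          calc (4 * x) ^ ((k:ℝ)/2) = (4*x) * (4*x) ^ ((k:ℝ)/2 - 1) := e1
            _ ≤ (4*x) * ((1+x) ^ (k-2)) := e6
            _ ≤ (1+x)^k - (x-1)^k := e7
            _ ≤ (1 + x) ^ k + (1 - x) ^ k := by linarith
        calc (c * x ^ γ) ^ k ≤ (2 * x ^ ((1:ℝ)/2)) ^ k := h2
          _ = (4 * x) ^ ((k:ℝ)/2) := h3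
          _ ≤ (1 + x) ^ k + (1 - x) ^ k := h4
    have hpos : (0:ℝ) < c ^ k * x ^ (γ * (k:ℝ)) := by positivity
    have hfpos : (0:ℝ) < (1 + x) ^ k + (1 - x) ^ k := lt_of_lt_of_le hpos hfx
    have hlb : Real.logb 2 (c ^ k * x ^ (γ * (k:ℝ))) ≤
        Real.logb 2 ((1 + x) ^ k + (1 - x) ^ k) :=
      Real.logb_le_logb_of_le (by norm_num) hpos hfx
    have hcompute : Real.logb 2 (c ^ k * x ^ (γ * (k:ℝ)))
        = (k:ℝ) * h + γ * k * Real.logb 2 x := by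
      rw [Real.logb_mul (by positivity) (by positivity), Real.logb_pow,
        Real.logb_rpow_eq_mul_logb_of_pos hx, hlogc]
      try ring
    rw [hcompute] at hlb
    linarith
  haveI : Nonempty (Set.Ioi (0:ℝ)) := ⟨⟨1, by norm_num⟩⟩
  set G : Set.Ioi (0:ℝ) → ℝ := fun x => Real.logb 2 ((1 + (x:ℝ)) ^ k + (1 - (x:ℝ)) ^ k)
      - γ * k * Real.logb 2 (x:ℝ) with hG
  have hbdd : BddBelow (Set.range G) := ⟨(k:ℝ) * h, by rintro y ⟨x, rfl⟩; exact key x x.2⟩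
  have hlow : (k:ℝ) * h ≤ ⨅ x, G x := le_ciInf fun x => key x x.2
  have hx₀ : γ / (1 - γ) ∈ Set.Ioi (0:ℝ) := by
    simp only [Set.mem_Ioi]
    positivity
  have hup : (⨅ x, G x) ≤ G ⟨γ / (1 - γ), hx₀⟩ := ciInf_le hbdd _
  have h2γ : (0:ℝ) < 1 - 2 * γ := by linarith
  have hval : G ⟨γ / (1 - γ), hx₀⟩ = (k:ℝ) * h + Real.logb 2 (1 + (1 - 2 * γ) ^ k) := by
    have e1 : 1 + γ / (1 - γ) = 1 / (1 - γ) := by field_simp; ring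
    have e2 : 1 - γ / (1 - γ) = (1 - 2 * γ) / (1 - γ) := by field_simp; ring
    have hnum : (0:ℝ) < 1 + (1 - 2 * γ) ^ k := by positivity
    have hden : (0:ℝ) < (1 - γ) ^ k := by positivity
    simp only [hG, e1, e2]
    rw [div_pow, div_pow, ← add_div, one_pow,
      Real.logb_div (ne_of_gt hnum) (ne_of_gt hden), Real.logb_pow,
      Real.logb_div (ne_of_gt hγ0) (ne_of_gt h1γ), hh]
    ring
  rw [hval] at hup
  constructor
  · rw [hF]
    linarith
  · rw [hF]
    linarith
end

section
/- (Maximum likely outcome of multinomial) Let $r \geq 2$, $c > 0$, and $p_1,\ldots,p_r \geq c$ with $\sum p_i = 1$. For $n$ balls dropped independently into $r$ bins with probabilities $p_i$, the probability of any particular outcome $(a_1,\ldots,a_r)$ with $\sum a_i = n$ is at most $C(r,c) \cdot n^{-(r-1)/2}$ for some constant $C(r,c)$ depending only on $r$ and $c$. -/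
open Finset Real Nat

lemma my_stirling_upper (n : ℕ) (hn : 1 ≤ n) :
    (n ! : ℝ) ≤ Real.exp 1 * Real.sqrt n * ((n : ℝ) / Real.exp 1) ^ n := by
  obtain ⟨m, rfl⟩ : ∃ m, n = m + 1 := ⟨n-1, by omega⟩
  have h1 : Stirling.stirlingSeq (m + 1) ≤ Stirling.stirlingSeq 1 := by
    simpa using Stirling.stirlingSeq'_antitone (Nat.zero_le m)
  rw [Stirling.stirlingSeq_one] at h1
  have hd : (0:ℝ) < Real.sqrt (2 * (m+1 : ℕ)) * (((m+1 : ℕ):ℝ) / Real.exp 1) ^ (m+1) := by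
    positivity
  have h2 : ((m+1)! : ℝ) = Stirling.stirlingSeq (m+1) *
      (Real.sqrt (2 * (m+1 : ℕ)) * (((m+1 : ℕ):ℝ) / Real.exp 1) ^ (m+1)) := by
    rw [Stirling.stirlingSeq, div_mul_cancel₀ _ hd.ne']
  rw [h2]
  have hsqrt : Real.sqrt (2 * (m+1 : ℕ)) = Real.sqrt 2 * Real.sqrt ((m+1 : ℕ)) := by
    rw [Real.sqrt_mul (by norm_num)]
  calc Stirling.stirlingSeq (m+1) * (Real.sqrt (2 * (m+1 : ℕ)) * (((m+1 : ℕ):ℝ) / Real.exp 1) ^ (m+1))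
      ≤ (Real.exp 1 / Real.sqrt 2) * (Real.sqrt (2 * (m+1 : ℕ)) * (((m+1 : ℕ):ℝ) / Real.exp 1) ^ (m+1)) :=
        mul_le_mul_of_nonneg_right h1 hd.le
    _ = Real.exp 1 * Real.sqrt ((m+1:ℕ)) * (((m+1 : ℕ):ℝ) / Real.exp 1) ^ (m+1) := by
        rw [hsqrt]; field_simp

lemma my_stirling_lower (n : ℕ) :
    Real.sqrt (2 * Real.pi * n) * ((n : ℝ) / Real.exp 1) ^ n ≤ (n ! : ℝ) := by
  rcases Nat.eq_zero_or_pos n with rfl | hn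
  · simp
  obtain ⟨m, rfl⟩ : ∃ m, n = m + 1 := ⟨n-1, by omega⟩
  have h1 : Real.sqrt Real.pi ≤ Stirling.stirlingSeq (m + 1) :=
    Stirling.stirlingSeq'_antitone.le_of_tendsto
      (Stirling.tendsto_stirlingSeq_sqrt_pi.comp (Filter.tendsto_add_atTop_nat 1)) m
  have hd : (0:ℝ) < Real.sqrt (2 * (m+1 : ℕ)) * (((m+1 : ℕ):ℝ) / Real.exp 1) ^ (m+1) := by
    positivity
  have h2 : Real.sqrt Real.pi * (Real.sqrt (2 * (m+1 : ℕ)) * (((m+1 : ℕ):ℝ) / Real.exp 1) ^ (m+1))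
      ≤ ((m+1)! : ℝ) := by
    have h3 := mul_le_mul_of_nonneg_right h1 hd.le
    rwa [Stirling.stirlingSeq, div_mul_cancel₀ _ hd.ne'] at h3
  calc Real.sqrt (2 * Real.pi * (m+1:ℕ)) * (((m+1:ℕ) : ℝ) / Real.exp 1) ^ (m+1)
      = Real.sqrt Real.pi * (Real.sqrt (2 * (m+1 : ℕ)) * (((m+1 : ℕ):ℝ) / Real.exp 1) ^ (m+1)) := by
        rw [show 2 * Real.pi * ((m+1:ℕ):ℝ) = Real.pi * (2 * ((m+1:ℕ):ℝ)) by ring,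
          Real.sqrt_mul Real.pi_nonneg, mul_assoc]
    _ ≤ _ := h2

lemma my_amgm {r : ℕ} (x : Fin r → ℝ) (hx : ∀ i, 0 ≤ x i) (a : Fin r → ℕ) (n : ℕ)
    (hn : 0 < n) (ha : ∑ i, a i = n) :
    ∏ i, x i ^ a i ≤ (∑ i, (a i : ℝ) / n * x i) ^ n := by
  have hn' : (0:ℝ) < n := by exact_mod_cast hn
  have key := Real.geom_mean_le_arith_mean_weighted Finset.univ
    (fun i => (a i : ℝ) / n) x (fun i _ => by positivity)
    (by rw [← Finset.sum_div]; field_simp; exact_mod_cast ha) (fun i _ => hx i)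
  have h1 : ∏ i, x i ^ a i = (∏ i, x i ^ ((a i : ℝ) / n)) ^ n := by
    rw [← Finset.prod_pow]
    refine Finset.prod_congr rfl fun i _ => ?_
    rw [← Real.rpow_natCast (x i ^ ((a i:ℝ)/n)) n, ← Real.rpow_natCast (x i) (a i),
      ← Real.rpow_mul (hx i)]
    congr 1
    field_simp
  rw [h1]
  exact pow_le_pow_left₀ (Finset.prod_nonneg fun i _ => Real.rpow_nonneg (hx i) _) key n


set_option maxHeartbeats 1000000 in
/-- Any single outcome of a multinomial experiment (`n` balls into `r` bins with
bin probabilities `p i ≥ c`) has probability at most `C(r,c) · n^{-(r-1)/2}`. -/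
theorem stmt15 (r : ℕ) (hr : 2 ≤ r) (c : ℝ) (hc : 0 < c) :
    ∃ C : ℝ, 0 < C ∧
      ∀ p : Fin r → ℝ, (∀ i, c ≤ p i) → (∑ i, p i = 1) →
        ∀ n : ℕ, 1 ≤ n → ∀ a : Fin r → ℕ, (∑ i, a i = n) →
          (Nat.multinomial Finset.univ a : ℝ) * ∏ i, p i ^ a i
            ≤ C * (n : ℝ) ^ (-(((r : ℝ) - 1) / 2)) := by
  have hβ : 0 < c/2 * (1 - Real.log 2) := by
    have h := Real.log_two_lt_d9
    nlinarith
  set β : ℝ := c/2 * (1 - Real.log 2) with hβdef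
  obtain ⟨M, hM⟩ : ∃ M : ℝ, ∀ k : ℕ, (k:ℝ)^r * Real.exp (-β)^k ≤ M := by
    have hlt : ‖Real.exp (-β)‖ < 1 := by
      rw [Real.norm_eq_abs, abs_of_pos (Real.exp_pos _)]
      rw [Real.exp_lt_one_iff]
      linarith
    have hsum : Summable (fun k : ℕ => (k:ℝ)^r * Real.exp (-β)^k) :=
      summable_pow_mul_geometric_of_norm_lt_one r hlt
    obtain ⟨M, hMb⟩ := hsum.tendsto_atTop_zero.bddAbove_range
    exact ⟨M, fun k => hMb ⟨k, rfl⟩⟩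
  have hMax : (0:ℝ) ≤ max M 0 := le_max_right _ _
  have hA0 : (0:ℝ) < (Real.pi*c) ^ (-((r:ℝ)/2)) :=
    Real.rpow_pos_of_pos (by positivity) _
  refine ⟨Real.exp 1 * ((Real.pi*c) ^ (-((r:ℝ)/2)) + max M 0 + 1),
    by nlinarith [Real.exp_pos 1, hA0, hMax], ?_⟩
  intro p hcp hps n hn a hna
  have hn' : (0:ℝ) < n := by exact_mod_cast hn
  have hp0 : ∀ i, 0 ≤ p i := fun i => hc.le.trans (hcp i)
  set G : ℝ := ∏ i, ((n:ℝ) * p i / a i) ^ a i with hGdef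
  set S : ℝ := ∏ i, (if a i = 0 then 1 else Real.sqrt (2*Real.pi*(a i : ℝ))) with hSdef
  have hG0 : 0 ≤ G :=
    Finset.prod_nonneg fun i _ => pow_nonneg
      (div_nonneg (mul_nonneg (Nat.cast_nonneg n) (hp0 i)) (Nat.cast_nonneg (a i))) _
  have hS1 : 1 ≤ S := by
    rw [hSdef]
    have h1 : ∏ _i : Fin r, (1:ℝ) ≤ ∏ i, (if a i = 0 then 1 else Real.sqrt (2*Real.pi*(a i : ℝ))) := by
      refine Finset.prod_le_prod (fun i _ => zero_le_one) (fun i _ => ?_)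
      split_ifs with h
      · exact le_rfl
      · rw [Real.one_le_sqrt]
        have : (1:ℝ) ≤ (a i : ℝ) := by exact_mod_cast Nat.one_le_iff_ne_zero.mpr h
        nlinarith [Real.pi_gt_three]
    simpa using h1
  have hS0 : 0 < S := lt_of_lt_of_le one_pos hS1
  -- main Stirling bound
  set D : ℝ := ∏ i, ((a i:ℝ)/Real.exp 1) ^ (a i) with hDdef
  have hDpos : 0 < D := by
    refine Finset.prod_pos fun i _ => ?_
    rcases Nat.eq_zero_or_pos (a i) with h | h
    · simp [h]
    · have : (0:ℝ) < (a i : ℝ) := by exact_mod_cast h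
      positivity
  have hmain : (Nat.multinomial Finset.univ a : ℝ) * ∏ i, p i ^ a i
      ≤ Real.exp 1 * Real.sqrt n * G / S := by
    have hdenle : S * D ≤ ∏ i, ((a i)! : ℝ) := by
      rw [hSdef, hDdef, ← Finset.prod_mul_distrib]
      refine Finset.prod_le_prod (fun i _ => ?_) (fun i _ => ?_)
      · refine mul_nonneg ?_ (pow_nonneg (by positivity) _)
        split_ifs
        · norm_num
        · exact Real.sqrt_nonneg _
      · split_ifs with h
        · simp [h]
        · exact my_stirling_lower (a i)
    have hid : ((n:ℝ)/Real.exp 1)^n * ∏ i, p i ^ a i = G * D := by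
      have hpow : ((n:ℝ)/Real.exp 1)^n = ∏ i, ((n:ℝ)/Real.exp 1)^(a i) := by
        rw [Finset.prod_pow_eq_pow_sum, hna]
      rw [hpow, ← Finset.prod_mul_distrib, hGdef, hDdef, ← Finset.prod_mul_distrib]
      refine Finset.prod_congr rfl fun i _ => ?_
      rcases Nat.eq_zero_or_pos (a i) with h | h
      · simp [h]
      · have hne : (a i : ℝ) ≠ 0 := by positivity
        rw [← mul_pow, ← mul_pow]
        congr 1
        field_simp
    have hppos : (0:ℝ) ≤ ∏ i, p i ^ a i :=
      Finset.prod_nonneg fun i _ => pow_nonneg (hp0 i) _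
    have hnum : (n ! : ℝ) * ∏ i, p i ^ a i ≤ Real.exp 1 * Real.sqrt n * (G * D) := by
      calc (n ! : ℝ) * ∏ i, p i ^ a i
          ≤ (Real.exp 1 * Real.sqrt n * ((n:ℝ)/Real.exp 1)^n) * ∏ i, p i ^ a i :=
            mul_le_mul_of_nonneg_right (my_stirling_upper n hn) hppos
        _ = Real.exp 1 * Real.sqrt n * (G * D) := by rw [mul_assoc, hid]
    have hmc : (Nat.multinomial Finset.univ a : ℝ) * ∏ i, ((a i)! : ℝ) = (n ! : ℝ) := by
      have h := Nat.multinomial_spec (s := Finset.univ) (f := a)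
      rw [hna] at h
      exact_mod_cast by rw [mul_comm]; exact_mod_cast congrArg (Nat.cast (R := ℝ)) h
    have hprodfacpos : (0:ℝ) < ∏ i, ((a i)! : ℝ) :=
      Finset.prod_pos fun i _ => by exact_mod_cast Nat.factorial_pos (a i)
    have heq : (Nat.multinomial Finset.univ a : ℝ) * ∏ i, p i ^ a i
        = ((n ! : ℝ) * ∏ i, p i ^ a i) / ∏ i, ((a i)! : ℝ) := by
      rw [← hmc]
      field_simp
    rw [heq]
    calc ((n ! : ℝ) * ∏ i, p i ^ a i) / ∏ i, ((a i)! : ℝ)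
        ≤ (Real.exp 1 * Real.sqrt n * (G * D)) / (S * D) :=
          div_le_div₀ (by positivity) hnum (by positivity) hdenle
      _ = Real.exp 1 * Real.sqrt n * G / S := by
          rw [div_eq_div_iff (by positivity) hS0.ne']
          ring
  rcases em (∀ i, c * n / 2 ≤ (a i : ℝ)) with hA | hB
  · -- Case A : all boxes get at least c*n/2 balls
    have hane : ∀ i, a i ≠ 0 := by
      intro i h
      have h1 := hA i
      rw [h] at h1
      simp only [Nat.cast_zero] at h1
      nlinarith
    have hG1 : G ≤ 1 := by
      have hx0 : ∀ i, (0:ℝ) ≤ (n:ℝ) * p i / a i := fun i =>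
        div_nonneg (mul_nonneg (Nat.cast_nonneg n) (hp0 i)) (Nat.cast_nonneg _)
      have h1 := my_amgm (fun i => (n:ℝ) * p i / a i) hx0 a n hn hna
      have hsum1 : ∑ i, (a i:ℝ)/n * ((n:ℝ) * p i / a i) = 1 := by
        rw [← hps]
        refine Finset.sum_congr rfl fun i _ => ?_
        have hia : (a i : ℝ) ≠ 0 := Nat.cast_ne_zero.mpr (hane i)
        field_simp
      calc G ≤ (∑ i, (a i:ℝ)/n * ((n:ℝ)*p i/a i))^n := h1
        _ = 1 := by rw [hsum1, one_pow]
    have hsqle : (Real.sqrt (Real.pi * c * n))^r ≤ S := by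
      rw [hSdef]
      have h2 : ∀ i ∈ Finset.univ,
          Real.sqrt (Real.pi*c*n) ≤ (if a i = 0 then 1 else Real.sqrt (2*Real.pi*(a i:ℝ))) := by
        intro i _
        rw [if_neg (hane i)]
        apply Real.sqrt_le_sqrt
        nlinarith [hA i, Real.pi_pos]
      calc (Real.sqrt (Real.pi*c*n))^r = ∏ _i : Fin r, Real.sqrt (Real.pi*c*n) := by
            rw [Finset.prod_const, Finset.card_univ, Fintype.card_fin]
        _ ≤ _ := Finset.prod_le_prod (fun i _ => Real.sqrt_nonneg _) h2
    have hsp : (0:ℝ) < Real.sqrt (Real.pi*c*n) := Real.sqrt_pos.mpr (by positivity)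
    have h3 : Real.exp 1 * Real.sqrt n * G / S
        ≤ Real.exp 1 * Real.sqrt n / (Real.sqrt (Real.pi*c*n))^r := by
      refine div_le_div₀ (by positivity) ?_ (pow_pos hsp r) hsqle
      exact mul_le_of_le_one_right (by positivity) hG1
    have h4 : Real.exp 1 * Real.sqrt n / (Real.sqrt (Real.pi*c*n))^r
        = Real.exp 1 * (Real.pi*c)^(-((r:ℝ)/2)) * (n:ℝ)^(-(((r:ℝ)-1)/2)) := by
      have e1 : (Real.sqrt (Real.pi*c*n))^r = (Real.pi*c)^((r:ℝ)/2) * (n:ℝ)^((r:ℝ)/2) := by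
        rw [Real.sqrt_eq_rpow, ← Real.rpow_natCast (((Real.pi*c*n))^((1:ℝ)/2)) r,
          ← Real.rpow_mul (by positivity),
          Real.mul_rpow (by positivity) (Nat.cast_nonneg n)]
        rw [show (1:ℝ)/2*(r:ℝ) = (r:ℝ)/2 by ring]
      have e2 : Real.sqrt (n:ℝ) = (n:ℝ)^((r:ℝ)/2) * (n:ℝ)^(-(((r:ℝ)-1)/2)) := by
        rw [Real.sqrt_eq_rpow, ← Real.rpow_add hn']
        congr 1; ring
      rw [e1, e2, Real.rpow_neg (by positivity : (0:ℝ) ≤ Real.pi*c)]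
      have hne1 : ((Real.pi*c)^((r:ℝ)/2)) ≠ 0 := (Real.rpow_pos_of_pos (by positivity) _).ne'
      have hne2 : ((n:ℝ)^((r:ℝ)/2)) ≠ 0 := (Real.rpow_pos_of_pos hn' _).ne'
      field_simp
    refine le_trans hmain (le_trans h3 (le_of_eq_of_le h4 ?_))
    refine mul_le_mul_of_nonneg_right ?_ (Real.rpow_nonneg hn'.le _)
    nlinarith [Real.exp_pos 1, hMax, hA0]
  · -- Case B : some box gets few balls
    push_neg at hB
    obtain ⟨j, hj⟩ := hB
    set x : Fin r → ℝ := fun i => (if i = j then (2:ℝ)⁻¹ else 1) * ((n:ℝ) * p i / a i)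
      with hxdef
    have hl0 : ∀ i : Fin r, (0:ℝ) ≤ (if i = j then (2:ℝ)⁻¹ else 1) := by
      intro i; split_ifs <;> norm_num
    have hx0 : ∀ i, 0 ≤ x i := fun i => mul_nonneg (hl0 i)
      (div_nonneg (mul_nonneg (Nat.cast_nonneg n) (hp0 i)) (Nat.cast_nonneg _))
    have hxa : ∏ i, x i ^ a i = (2:ℝ)⁻¹ ^ (a j) * G := by
      rw [hGdef]
      calc ∏ i, x i ^ a i
          = ∏ i, ((if i = j then (2:ℝ)⁻¹ else 1)^ a i * ((n:ℝ)*p i/(a i:ℝ))^ a i) := by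
            refine Finset.prod_congr rfl fun i _ => ?_
            rw [hxdef, mul_pow]
        _ = (∏ i, (if i = j then (2:ℝ)⁻¹ else 1)^ a i) * ∏ i, ((n:ℝ)*p i/(a i:ℝ))^ a i :=
            Finset.prod_mul_distrib
        _ = (2:ℝ)⁻¹ ^ (a j) * ∏ i, ((n:ℝ)*p i/(a i:ℝ))^ a i := by
            congr 1
            have hsw : ∀ i : Fin r, (if i = j then (2:ℝ)⁻¹ else 1)^(a i)
                = (if i = j then (2:ℝ)⁻¹ ^ (a i) else 1) := by
              intro i; split_ifs <;> simp
            rw [Finset.prod_congr rfl (fun i _ => hsw i),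
              Finset.prod_ite_eq' Finset.univ j (fun i => (2:ℝ)⁻¹ ^ (a i))]
            simp
    have hpj1 : p j ≤ 1 := by
      have h := Finset.single_le_sum (f := p) (fun i _ => hp0 i) (Finset.mem_univ j)
      rwa [hps] at h
    have hsumB : ∑ i, (a i:ℝ)/n * x i ≤ 1 - p j / 2 := by
      have hterm : ∀ i ∈ Finset.univ, (a i:ℝ)/n * x i ≤ (if i = j then (2:ℝ)⁻¹ else 1) * p i := by
        intro i _
        rcases Nat.eq_zero_or_pos (a i) with h | h
        · rw [h]
          simp only [Nat.cast_zero, zero_div, zero_mul]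
          exact mul_nonneg (hl0 i) (hp0 i)
        · have hia : (a i:ℝ) ≠ 0 := by positivity
          rw [hxdef]
          have heq2 : (a i:ℝ)/n * ((if i = j then (2:ℝ)⁻¹ else 1) * ((n:ℝ)*p i/(a i:ℝ)))
              = (if i = j then (2:ℝ)⁻¹ else 1) * p i := by
            field_simp
          rw [heq2]
      calc ∑ i, (a i:ℝ)/n * x i ≤ ∑ i, (if i = j then (2:ℝ)⁻¹ else 1) * p i :=
            Finset.sum_le_sum hterm
        _ = ∑ i, (p i - (if i = j then p i/2 else 0)) := by
            refine Finset.sum_congr rfl fun i _ => ?_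
            split_ifs <;> ring
        _ = 1 - p j/2 := by
            rw [Finset.sum_sub_distrib, hps, Finset.sum_ite_eq' Finset.univ j (fun i => p i/2)]
            simp
    have hamgm := my_amgm x hx0 a n hn hna
    have hG2 : G = 2^(a j) * ∏ i, x i ^ a i := by
      rw [hxa, ← mul_assoc, ← mul_pow]
      norm_num
    have hsum0 : 0 ≤ ∑ i, (a i:ℝ)/n * x i :=
      Finset.sum_nonneg fun i _ => mul_nonneg (by positivity) (hx0 i)
    have hGB : G ≤ Real.exp (-β * n) := by
      rw [hG2]
      have h2 : ∏ i, x i ^ a i ≤ (1 - p j/2)^n := hamgm.trans (pow_le_pow_left₀ hsum0 hsumB n)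
      have h3 : (1 - p j / 2 : ℝ) ≤ Real.exp (-(c/2)) := by
        have h3a := Real.add_one_le_exp (-(c/2))
        have h3b := hcp j
        linarith
      have h3' : (1 - p j/2)^n ≤ Real.exp (-(c/2))^n :=
        pow_le_pow_left₀ (by linarith) h3 n
      have h4 : (2:ℝ)^(a j) ≤ (2:ℝ)^((c*n/2:ℝ)) := by
        rw [← Real.rpow_natCast 2 (a j)]
        exact Real.rpow_le_rpow_of_exponent_le one_le_two hj.le
      have h5 : (2:ℝ)^((c*n/2:ℝ)) * Real.exp (-(c/2))^n = Real.exp (-β * n) := by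
        rw [← Real.exp_nat_mul, Real.rpow_def_of_pos two_pos, ← Real.exp_add, hβdef]
        congr 1; ring
      calc (2:ℝ)^(a j) * ∏ i, x i ^ a i ≤ (2:ℝ)^(a j) * Real.exp (-(c/2))^n :=
            mul_le_mul_of_nonneg_left (h2.trans h3') (by positivity)
        _ ≤ (2:ℝ)^((c*n/2:ℝ)) * Real.exp (-(c/2))^n :=
            mul_le_mul_of_nonneg_right h4 (by positivity)
        _ = Real.exp (-β*n) := h5
    have hch : Real.exp 1 * Real.sqrt n * G / S
        ≤ Real.exp 1 * (Real.sqrt n * Real.exp (-β*n)) := by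
      calc Real.exp 1 * Real.sqrt n * G / S ≤ Real.exp 1 * Real.sqrt n * G := by
            exact div_le_self (by positivity) hS1
        _ ≤ Real.exp 1 * (Real.sqrt n * Real.exp (-β*n)) := by
            rw [mul_assoc]
            exact mul_le_mul_of_nonneg_left
              (mul_le_mul_of_nonneg_left hGB (Real.sqrt_nonneg _)) (Real.exp_pos 1).le
    have h5 : (n:ℝ)^((r:ℝ)/2) * Real.exp (-β*n) ≤ max M 0 := by
      have ha1 : (n:ℝ)^((r:ℝ)/2) ≤ (n:ℝ)^((r:ℝ)) := by
        refine Real.rpow_le_rpow_of_exponent_le (by exact_mod_cast hn) ?_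
        have : (0:ℝ) ≤ (r:ℝ) := Nat.cast_nonneg r
        linarith
      have ha3 : Real.exp (-β*n) = Real.exp (-β)^n := by
        rw [← Real.exp_nat_mul]; congr 1; ring
      calc (n:ℝ)^((r:ℝ)/2) * Real.exp (-β*n) ≤ (n:ℝ)^((r:ℝ)) * Real.exp (-β*n) :=
            mul_le_mul_of_nonneg_right ha1 (Real.exp_pos _).le
        _ = (n:ℝ)^r * Real.exp (-β)^n := by rw [Real.rpow_natCast, ha3]
        _ ≤ M := hM n
        _ ≤ max M 0 := le_max_left _ _
    have key : Real.sqrt (n:ℝ) = (n:ℝ)^((r:ℝ)/2) * (n:ℝ)^(-(((r:ℝ)-1)/2)) := by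
      rw [Real.sqrt_eq_rpow, ← Real.rpow_add hn']
      congr 1; ring
    have h6 : Real.sqrt (n:ℝ) * Real.exp (-β*n) ≤ max M 0 * (n:ℝ)^(-(((r:ℝ)-1)/2)) := by
      calc Real.sqrt (n:ℝ) * Real.exp (-β*n)
          = ((n:ℝ)^((r:ℝ)/2) * Real.exp (-β*n)) * (n:ℝ)^(-(((r:ℝ)-1)/2)) := by
            rw [key]; ring
        _ ≤ max M 0 * (n:ℝ)^(-(((r:ℝ)-1)/2)) :=
            mul_le_mul_of_nonneg_right h5 (Real.rpow_nonneg hn'.le _)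
    refine le_trans hmain (le_trans hch ?_)
    calc Real.exp 1 * (Real.sqrt n * Real.exp (-β*n))
        ≤ Real.exp 1 * (max M 0 * (n:ℝ)^(-(((r:ℝ)-1)/2))) :=
          mul_le_mul_of_nonneg_left h6 (Real.exp_pos 1).le
      _ ≤ Real.exp 1 * ((Real.pi*c) ^ (-((r:ℝ)/2)) + max M 0 + 1) * (n:ℝ)^(-(((r:ℝ)-1)/2)) := by
          rw [← mul_assoc]
          refine mul_le_mul_of_nonneg_right ?_ (Real.rpow_nonneg hn'.le _)
          nlinarith [Real.exp_pos 1, hA0, hMax]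
end
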